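/- In DPAL, the depth adjustment axiom is valid: for all n ∈ ℕ, [φ] E_a^n ↔ (φ → ((P_a^{d(φ)} ∧ E_a^{n+d(φ)}) ∨ (¬P_a^{d(φ)} ∧ E_a^n))) holds at every pointed model. -/

import Mathlib

/-- Formulas of DPAL. -/
inductive Form (A P : Type) : Type
  | atom : P → Form A P
  | eqd  : A → ℕ → Form A P
  | ged  : A → ℕ → Form A P
  | neg  : Form A P → Form A P
  | and  : Form A P → Form A P → Form A P
  | imp  : Form A P → Form A P → Form A P
  | kinf : A → Form A P → Form A P
  | k    : A → Form A P → Form A P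
  | ann  : Form A P → Form A P → Form A P

namespace Form
/-- Modal depth of a formula; `d([φ]ψ) = d(φ) + d(ψ)`. -/
def md {A P : Type} : Form A P → ℕ
  | atom _ => 0
  | eqd _ _ => 0
  | ged _ _ => 0
  | neg φ => φ.md
  | and φ ψ => max φ.md ψ.md
  | imp φ ψ => max φ.md ψ.md
  | kinf _ φ => φ.md + 1
  | k _ φ => φ.md + 1
  | ann φ ψ => φ.md + ψ.md

/-- Biconditional, as an abbreviation. -/
def iff {A P : Type} (φ ψ : Form A P) : Form A P := (φ.imp ψ).and (ψ.imp φ)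

/-- Disjunction, as an abbreviation. -/
def or {A P : Type} (φ ψ : Form A P) : Form A P := .neg ((Form.neg φ).and (Form.neg ψ))
end Form

/-- A DPAL model: states, equivalence relations, valuation, depth assignment. -/
structure Model (A P : Type) where
  S : Type
  r : A → S → S → Prop
  equiv : ∀ a, Equivalence (r a)
  V : S → P → Prop
  d : A → S → ℕ

/-- The base relation `R_a` of the DPAL update, for announcement extension `X`
(the states satisfying the announcement) and announcement depth `k`: relations
are copied on the negative (`false`) copy of the model and on the positive
(`true`) copy restricted to states satisfying the announcement, and the
positive copy of a state is linked to its negative copy exactly when the agent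
is too shallow for the announcement there. -/
def updR {A P : Type} (M : Model A P) (X : M.S → Prop) (k : ℕ) (a : A) :
    Bool × M.S → Bool × M.S → Prop := fun x y =>
  (x.1 = y.1 ∧ M.r a x.2 y.2 ∧ (x.1 = true → X x.2 ∧ X y.2)) ∨
  (x.1 = true ∧ y.1 = false ∧ x.2 = y.2 ∧ X x.2 ∧ ¬ (M.d a x.2 ≥ k))

/-- The DPAL model update `M|φ`: a negative copy of every state together with a
positive copy of every state satisfying the announcement (spurious positive
copies of other states remain as unreachable isolated points of the carrier
`Bool × S`); the relation is the equivalence closure of `updR`; depths are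
decremented by `k` on the positive copy when the agent is deep enough. -/
def upd {A P : Type} (M : Model A P) (X : M.S → Prop) (k : ℕ) : Model A P where
  S := Bool × M.S
  r a := Relation.EqvGen (updR M X k a)
  equiv a := Relation.EqvGen.is_equivalence _
  V x := M.V x.2
  d a x := if x.1 = true ∧ M.d a x.2 ≥ k then M.d a x.2 - k else M.d a x.2

/-- DPAL satisfaction; announcements are evaluated at the positive copy
`(true, s)` of the current state. -/
def sat {A P : Type} : Form A P → (M : Model A P) → M.S → Prop
  | .atom p, M, s => M.V s p
  | .eqd a n, M, s => M.d a s = n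
  | .ged a n, M, s => M.d a s ≥ n
  | .neg φ, M, s => ¬ sat φ M s
  | .and φ ψ, M, s => sat φ M s ∧ sat ψ M s
  | .imp φ ψ, M, s => sat φ M s → sat ψ M s
  | .kinf a φ, M, s => ∀ t, M.r a s t → sat φ M t
  | .k a φ, M, s => M.d a s ≥ φ.md ∧ ∀ t, M.r a s t → sat φ M t
  | .ann φ ψ, M, s => sat φ M s → sat ψ (upd M (fun t => sat φ M t) φ.md) (true, s)

/-- Depth adjustment in DPAL: for all `n : ℕ`,
`[φ] E_a^n ↔ (φ → ((P_a^{d(φ)} ∧ E_a^{n+d(φ)}) ∨ (¬P_a^{d(φ)} ∧ E_a^n)))`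
is valid. -/
theorem dpal_depth_adjustment {A P : Type} (a : A) (n : ℕ) (φ : Form A P)
    (M : Model A P) (s : M.S) :
    sat (Form.iff (.ann φ (.eqd a n))
      (.imp φ (Form.or (.and (.ged a φ.md) (.eqd a (n + φ.md)))
        (.and (.neg (.ged a φ.md)) (.eqd a n))))) M s := by
  simp only [Form.iff, Form.or, sat, upd, Form.md]
  constructor
  · intro h hφ
    have := h hφ
    split at this <;> rename_i hc <;> push_neg <;> intro h' <;>
      simp only [true_and, not_and, not_le] at hc <;> omega
  · intro h hφ
    have := h hφ
    split
    next hc =>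
      rcases not_and_or.mp this with h' | h' <;> push_neg at h' <;> omega
    next hc =>
      simp only [true_and, not_and, not_le] at hc
      rcases not_and_or.mp this with h' | h' <;> push_neg at h' <;> omega
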